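/- Let Q := convexHull{ω₀, ω₁, ω₂, ω₃} ⊆ ℝ³. An invertible linear map T : ℝ³ → ℝ³ satisfies T(Q) = Q if and only if T is one of the eight matrices U_k^s = [[cos(πk/2), −s·sin(πk/2), 0], [sin(πk/2), s·cos(πk/2), 0], [0, 0, 1]] with k ∈ {0,1,2,3} and s ∈ {+1, −1}. In other words, the reversible channels of the squit form the dihedral group of order eight. -/

import Mathlib

open Matrix Real

/-- The four extremal states of the squit. -/
noncomputable def ws : Fin 4 → (Fin 3 → ℝ) :=
  ![![1, 0, 1], ![0, 1, 1], ![-1, 0, 1], ![0, -1, 1]]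

/-- The convex set of states of the squit (a square). -/
noncomputable def Q : Set (Fin 3 → ℝ) := convexHull ℝ {ws 0, ws 1, ws 2, ws 3}

/-- The dihedral symmetries `U_k^s` of the squit. -/
noncomputable def U (k : Fin 4) (s : ℝ) : Matrix (Fin 3) (Fin 3) ℝ :=
  Matrix.of
    ![![Real.cos (π * k / 2), -s * Real.sin (π * k / 2), 0],
      ![Real.sin (π * k / 2),  s * Real.cos (π * k / 2), 0],
      ![0, 0, 1]]

lemma v0 : ((0:Fin 4):ℕ) = 0 := rfl
lemma v1 : ((1:Fin 4):ℕ) = 1 := rfl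
lemma v2 : ((2:Fin 4):ℕ) = 2 := rfl
lemma v3 : ((3:Fin 4):ℕ) = 3 := rfl
lemma cos3 : Real.cos (π * 3 / 2) = 0 := by
  rw [show π * 3 / 2 = π + π / 2 by ring, Real.cos_add]; simp
lemma sin3 : Real.sin (π * 3 / 2) = -1 := by
  rw [show π * 3 / 2 = π + π / 2 by ring, Real.sin_add]; simp
lemma cos2 : Real.cos (π * 2 / 2) = -1 := by
  rw [show π * 2 / 2 = π by ring]; simp
lemma sin2 : Real.sin (π * 2 / 2) = 0 := by
  rw [show π * 2 / 2 = π by ring]; simp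

lemma Umv0p0 : (U 0 1).mulVec (ws 0) = ws 0 := by
  funext m
  fin_cases m <;> simp [U, ws, Matrix.mulVec, dotProduct, Fin.sum_univ_three, Matrix.vecHead, Matrix.vecTail, v0,v1,v2,v3, cos3, sin3, cos2, sin2]

lemma Umv0p1 : (U 0 1).mulVec (ws 1) = ws 1 := by
  funext m
  fin_cases m <;> simp [U, ws, Matrix.mulVec, dotProduct, Fin.sum_univ_three, Matrix.vecHead, Matrix.vecTail, v0,v1,v2,v3, cos3, sin3, cos2, sin2]

lemma Umv0p2 : (U 0 1).mulVec (ws 2) = ws 2 := by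
  funext m
  fin_cases m <;> simp [U, ws, Matrix.mulVec, dotProduct, Fin.sum_univ_three, Matrix.vecHead, Matrix.vecTail, v0,v1,v2,v3, cos3, sin3, cos2, sin2]

lemma Umv0p3 : (U 0 1).mulVec (ws 3) = ws 3 := by
  funext m
  fin_cases m <;> simp [U, ws, Matrix.mulVec, dotProduct, Fin.sum_univ_three, Matrix.vecHead, Matrix.vecTail, v0,v1,v2,v3, cos3, sin3, cos2, sin2]

lemma Umv0m0 : (U 0 (-1)).mulVec (ws 0) = ws 0 := by
  funext m
  fin_cases m <;> simp [U, ws, Matrix.mulVec, dotProduct, Fin.sum_univ_three, Matrix.vecHead, Matrix.vecTail, v0,v1,v2,v3, cos3, sin3, cos2, sin2]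

lemma Umv0m1 : (U 0 (-1)).mulVec (ws 1) = ws 3 := by
  funext m
  fin_cases m <;> simp [U, ws, Matrix.mulVec, dotProduct, Fin.sum_univ_three, Matrix.vecHead, Matrix.vecTail, v0,v1,v2,v3, cos3, sin3, cos2, sin2]

lemma Umv0m2 : (U 0 (-1)).mulVec (ws 2) = ws 2 := by
  funext m
  fin_cases m <;> simp [U, ws, Matrix.mulVec, dotProduct, Fin.sum_univ_three, Matrix.vecHead, Matrix.vecTail, v0,v1,v2,v3, cos3, sin3, cos2, sin2]

lemma Umv0m3 : (U 0 (-1)).mulVec (ws 3) = ws 1 := by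
  funext m
  fin_cases m <;> simp [U, ws, Matrix.mulVec, dotProduct, Fin.sum_univ_three, Matrix.vecHead, Matrix.vecTail, v0,v1,v2,v3, cos3, sin3, cos2, sin2]

lemma Umv1p0 : (U 1 1).mulVec (ws 0) = ws 1 := by
  funext m
  fin_cases m <;> simp [U, ws, Matrix.mulVec, dotProduct, Fin.sum_univ_three, Matrix.vecHead, Matrix.vecTail, v0,v1,v2,v3, cos3, sin3, cos2, sin2]

lemma Umv1p1 : (U 1 1).mulVec (ws 1) = ws 2 := by
  funext m
  fin_cases m <;> simp [U, ws, Matrix.mulVec, dotProduct, Fin.sum_univ_three, Matrix.vecHead, Matrix.vecTail, v0,v1,v2,v3, cos3, sin3, cos2, sin2]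

lemma Umv1p2 : (U 1 1).mulVec (ws 2) = ws 3 := by
  funext m
  fin_cases m <;> simp [U, ws, Matrix.mulVec, dotProduct, Fin.sum_univ_three, Matrix.vecHead, Matrix.vecTail, v0,v1,v2,v3, cos3, sin3, cos2, sin2]

lemma Umv1p3 : (U 1 1).mulVec (ws 3) = ws 0 := by
  funext m
  fin_cases m <;> simp [U, ws, Matrix.mulVec, dotProduct, Fin.sum_univ_three, Matrix.vecHead, Matrix.vecTail, v0,v1,v2,v3, cos3, sin3, cos2, sin2]

lemma Umv1m0 : (U 1 (-1)).mulVec (ws 0) = ws 1 := by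
  funext m
  fin_cases m <;> simp [U, ws, Matrix.mulVec, dotProduct, Fin.sum_univ_three, Matrix.vecHead, Matrix.vecTail, v0,v1,v2,v3, cos3, sin3, cos2, sin2]

lemma Umv1m1 : (U 1 (-1)).mulVec (ws 1) = ws 0 := by
  funext m
  fin_cases m <;> simp [U, ws, Matrix.mulVec, dotProduct, Fin.sum_univ_three, Matrix.vecHead, Matrix.vecTail, v0,v1,v2,v3, cos3, sin3, cos2, sin2]

lemma Umv1m2 : (U 1 (-1)).mulVec (ws 2) = ws 3 := by
  funext m
  fin_cases m <;> simp [U, ws, Matrix.mulVec, dotProduct, Fin.sum_univ_three, Matrix.vecHead, Matrix.vecTail, v0,v1,v2,v3, cos3, sin3, cos2, sin2]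

lemma Umv1m3 : (U 1 (-1)).mulVec (ws 3) = ws 2 := by
  funext m
  fin_cases m <;> simp [U, ws, Matrix.mulVec, dotProduct, Fin.sum_univ_three, Matrix.vecHead, Matrix.vecTail, v0,v1,v2,v3, cos3, sin3, cos2, sin2]

lemma Umv2p0 : (U 2 1).mulVec (ws 0) = ws 2 := by
  funext m
  fin_cases m <;> simp [U, ws, Matrix.mulVec, dotProduct, Fin.sum_univ_three, Matrix.vecHead, Matrix.vecTail, v0,v1,v2,v3, cos3, sin3, cos2, sin2]

lemma Umv2p1 : (U 2 1).mulVec (ws 1) = ws 3 := by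
  funext m
  fin_cases m <;> simp [U, ws, Matrix.mulVec, dotProduct, Fin.sum_univ_three, Matrix.vecHead, Matrix.vecTail, v0,v1,v2,v3, cos3, sin3, cos2, sin2]

lemma Umv2p2 : (U 2 1).mulVec (ws 2) = ws 0 := by
  funext m
  fin_cases m <;> simp [U, ws, Matrix.mulVec, dotProduct, Fin.sum_univ_three, Matrix.vecHead, Matrix.vecTail, v0,v1,v2,v3, cos3, sin3, cos2, sin2]

lemma Umv2p3 : (U 2 1).mulVec (ws 3) = ws 1 := by
  funext m
  fin_cases m <;> simp [U, ws, Matrix.mulVec, dotProduct, Fin.sum_univ_three, Matrix.vecHead, Matrix.vecTail, v0,v1,v2,v3, cos3, sin3, cos2, sin2]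

lemma Umv2m0 : (U 2 (-1)).mulVec (ws 0) = ws 2 := by
  funext m
  fin_cases m <;> simp [U, ws, Matrix.mulVec, dotProduct, Fin.sum_univ_three, Matrix.vecHead, Matrix.vecTail, v0,v1,v2,v3, cos3, sin3, cos2, sin2]

lemma Umv2m1 : (U 2 (-1)).mulVec (ws 1) = ws 1 := by
  funext m
  fin_cases m <;> simp [U, ws, Matrix.mulVec, dotProduct, Fin.sum_univ_three, Matrix.vecHead, Matrix.vecTail, v0,v1,v2,v3, cos3, sin3, cos2, sin2]

lemma Umv2m2 : (U 2 (-1)).mulVec (ws 2) = ws 0 := by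
  funext m
  fin_cases m <;> simp [U, ws, Matrix.mulVec, dotProduct, Fin.sum_univ_three, Matrix.vecHead, Matrix.vecTail, v0,v1,v2,v3, cos3, sin3, cos2, sin2]

lemma Umv2m3 : (U 2 (-1)).mulVec (ws 3) = ws 3 := by
  funext m
  fin_cases m <;> simp [U, ws, Matrix.mulVec, dotProduct, Fin.sum_univ_three, Matrix.vecHead, Matrix.vecTail, v0,v1,v2,v3, cos3, sin3, cos2, sin2]

lemma Umv3p0 : (U 3 1).mulVec (ws 0) = ws 3 := by
  funext m
  fin_cases m <;> simp [U, ws, Matrix.mulVec, dotProduct, Fin.sum_univ_three, Matrix.vecHead, Matrix.vecTail, v0,v1,v2,v3, cos3, sin3, cos2, sin2]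

lemma Umv3p1 : (U 3 1).mulVec (ws 1) = ws 0 := by
  funext m
  fin_cases m <;> simp [U, ws, Matrix.mulVec, dotProduct, Fin.sum_univ_three, Matrix.vecHead, Matrix.vecTail, v0,v1,v2,v3, cos3, sin3, cos2, sin2]

lemma Umv3p2 : (U 3 1).mulVec (ws 2) = ws 1 := by
  funext m
  fin_cases m <;> simp [U, ws, Matrix.mulVec, dotProduct, Fin.sum_univ_three, Matrix.vecHead, Matrix.vecTail, v0,v1,v2,v3, cos3, sin3, cos2, sin2]

lemma Umv3p3 : (U 3 1).mulVec (ws 3) = ws 2 := by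
  funext m
  fin_cases m <;> simp [U, ws, Matrix.mulVec, dotProduct, Fin.sum_univ_three, Matrix.vecHead, Matrix.vecTail, v0,v1,v2,v3, cos3, sin3, cos2, sin2]

lemma Umv3m0 : (U 3 (-1)).mulVec (ws 0) = ws 3 := by
  funext m
  fin_cases m <;> simp [U, ws, Matrix.mulVec, dotProduct, Fin.sum_univ_three, Matrix.vecHead, Matrix.vecTail, v0,v1,v2,v3, cos3, sin3, cos2, sin2]

lemma Umv3m1 : (U 3 (-1)).mulVec (ws 1) = ws 2 := by
  funext m
  fin_cases m <;> simp [U, ws, Matrix.mulVec, dotProduct, Fin.sum_univ_three, Matrix.vecHead, Matrix.vecTail, v0,v1,v2,v3, cos3, sin3, cos2, sin2]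

lemma Umv3m2 : (U 3 (-1)).mulVec (ws 2) = ws 1 := by
  funext m
  fin_cases m <;> simp [U, ws, Matrix.mulVec, dotProduct, Fin.sum_univ_three, Matrix.vecHead, Matrix.vecTail, v0,v1,v2,v3, cos3, sin3, cos2, sin2]

lemma Umv3m3 : (U 3 (-1)).mulVec (ws 3) = ws 0 := by
  funext m
  fin_cases m <;> simp [U, ws, Matrix.mulVec, dotProduct, Fin.sum_univ_three, Matrix.vecHead, Matrix.vecTail, v0,v1,v2,v3, cos3, sin3, cos2, sin2]


lemma eq_of_ws {M N : Matrix (Fin 3) (Fin 3) ℝ} (h0 : M.mulVec (ws 0) = N.mulVec (ws 0))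
    (h1 : M.mulVec (ws 1) = N.mulVec (ws 1)) (h2 : M.mulVec (ws 2) = N.mulVec (ws 2)) : M = N := by
  ext i j
  have e0 := congrFun h0 i
  have e1 := congrFun h1 i
  have e2 := congrFun h2 i
  simp [ws, Matrix.mulVec, dotProduct, Fin.sum_univ_three] at e0 e1 e2
  fin_cases j <;> simp <;> linarith

lemma ws_mem (i : Fin 4) : ws i ∈ ({ws 0, ws 1, ws 2, ws 3} : Set (Fin 3 → ℝ)) := by
  fin_cases i <;> simp

lemma memQ_iff (x : Fin 3 → ℝ) :
    x ∈ Q ↔ ∃ c : Fin 4 → ℝ, (∀ i, 0 ≤ c i) ∧ ∑ i, c i = 1 ∧ ∑ i, c i • ws i = x := by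
  constructor
  · intro hx
    have hconv : Convex ℝ {x : Fin 3 → ℝ |
        ∃ c : Fin 4 → ℝ, (∀ i, 0 ≤ c i) ∧ ∑ i, c i = 1 ∧ ∑ i, c i • ws i = x} := by
      intro y hy z hz a b ha hb hab
      obtain ⟨c, hc0, hc1, rfl⟩ := hy
      obtain ⟨d, hd0, hd1, rfl⟩ := hz
      refine ⟨fun l => a * c l + b * d l, fun l => add_nonneg (mul_nonneg ha (hc0 l)) (mul_nonneg hb (hd0 l)), ?_, ?_⟩
      · rw [Finset.sum_add_distrib, ← Finset.mul_sum, ← Finset.mul_sum, hc1, hd1,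
          mul_one, mul_one]; exact hab
      · rw [Finset.smul_sum, Finset.smul_sum, ← Finset.sum_add_distrib]
        exact Finset.sum_congr rfl fun l _ => by rw [add_smul, mul_smul, mul_smul]
    have hsub : ({ws 0, ws 1, ws 2, ws 3} : Set (Fin 3 → ℝ)) ⊆ {x : Fin 3 → ℝ |
        ∃ c : Fin 4 → ℝ, (∀ i, 0 ≤ c i) ∧ ∑ i, c i = 1 ∧ ∑ i, c i • ws i = x} := by
      rintro y (rfl | rfl | rfl | rfl)
      · exact ⟨![1,0,0,0], by intro l; fin_cases l <;> norm_num,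
          by norm_num [Fin.sum_univ_four, Matrix.cons_val_two, Matrix.cons_val_three], by simp [Fin.sum_univ_four]⟩
      · exact ⟨![0,1,0,0], by intro l; fin_cases l <;> norm_num,
          by norm_num [Fin.sum_univ_four, Matrix.cons_val_two, Matrix.cons_val_three], by simp [Fin.sum_univ_four]⟩
      · exact ⟨![0,0,1,0], by intro l; fin_cases l <;> norm_num,
          by norm_num [Fin.sum_univ_four, Matrix.cons_val_two, Matrix.cons_val_three], by simp [Fin.sum_univ_four]⟩
      · exact ⟨![0,0,0,1], by intro l; fin_cases l <;> norm_num,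
          by norm_num [Fin.sum_univ_four, Matrix.cons_val_two, Matrix.cons_val_three], by simp [Fin.sum_univ_four]⟩
    exact convexHull_min hsub hconv hx
  · rintro ⟨c, h0, h1, rfl⟩
    exact mem_convexHull_of_exists_fintype c ws h0 h1 ws_mem rfl

lemma vertex_unique (i : Fin 4) (c : Fin 4 → ℝ) (h0 : ∀ j, 0 ≤ c j) (h1 : ∑ j, c j = 1)
    (h : ∑ j, c j • ws j = ws i) : ∀ j, c j = if j = i then 1 else 0 := by
  have e0 := congrFun h 0
  have e1 := congrFun h 1
  rw [Fin.sum_univ_four] at h1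
  have g0 := h0 0; have g1 := h0 1; have g2 := h0 2; have g3 := h0 3
  intro j
  fin_cases i <;> simp [ws, Fin.sum_univ_four] at e0 e1 <;> fin_cases j <;> simp <;> linarith

lemma ws_inj : Function.Injective ws := by
  intro a b hab
  have h0 := congrFun hab 0
  have h1 := congrFun hab 1
  fin_cases a <;> fin_cases b <;> simp [ws] at h0 h1 ⊢ <;> norm_num at *

lemma img_eq (A : Matrix (Fin 3) (Fin 3) ℝ) :
    A.mulVec '' Q = convexHull ℝ
      {A.mulVec (ws 0), A.mulVec (ws 1), A.mulVec (ws 2), A.mulVec (ws 3)} := by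
  have h1 : A.mulVec = ⇑(Matrix.mulVecLin A) := by
    funext x; simp [Matrix.mulVecLin_apply]
  unfold Q
  rw [h1, LinearMap.image_convexHull]
  congr 1
  rw [Set.image_insert_eq, Set.image_insert_eq, Set.image_insert_eq, Set.image_singleton]

/-- The reversible channels of the squit form the dihedral group of order eight. -/
theorem squit_reversible_channels (T : Matrix (Fin 3) (Fin 3) ℝ) (hT : IsUnit T) :
    T.mulVec '' Q = Q ↔
    ∃ (k : Fin 4) (s : ℝ), (s = 1 ∨ s = -1) ∧ T = U k s := by
  have h4 : ∀ m : Fin 4, m = 0 ∨ m = 1 ∨ m = 2 ∨ m = 3 := by decide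
  obtain ⟨u, rfl⟩ := hT
  constructor
  · intro hQ
    have hinv : ∀ x, (↑u⁻¹ : Matrix (Fin 3) (Fin 3) ℝ).mulVec
        ((↑u : Matrix (Fin 3) (Fin 3) ℝ).mulVec x) = x := by
      intro x; rw [Matrix.mulVec_mulVec, u.inv_mul, Matrix.one_mulVec]
    have hQM : (↑u⁻¹ : Matrix (Fin 3) (Fin 3) ℝ).mulVec '' Q = Q := by
      conv_lhs => rw [← hQ]
      rw [Set.image_image]
      simp only [hinv, Set.image_id']
    have hrep : ∀ j : Fin 4, ∃ c : Fin 4 → ℝ, (∀ l, 0 ≤ c l) ∧ ∑ l, c l = 1 ∧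
        ∑ l, c l • ws l = (↑u : Matrix (Fin 3) (Fin 3) ℝ).mulVec (ws j) := by
      intro j
      refine (memQ_iff _).1 ?_
      rw [← hQ]
      exact Set.mem_image_of_mem _ (subset_convexHull ℝ _ (ws_mem j))
    choose C hC0 hC1 hC2 using hrep
    have key : ∀ i : Fin 4, ∃ j : Fin 4,
        (↑u : Matrix (Fin 3) (Fin 3) ℝ).mulVec (ws j) = ws i := by
      intro i
      obtain ⟨d, hd0, hd1, hd⟩ := (memQ_iff
          ((↑u⁻¹ : Matrix (Fin 3) (Fin 3) ℝ).mulVec (ws i))).1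
        (by rw [← hQM]; exact Set.mem_image_of_mem _ (subset_convexHull ℝ _ (ws_mem i)))
      have hws : ∑ j, d j • ((↑u : Matrix (Fin 3) (Fin 3) ℝ).mulVec (ws j)) = ws i := by
        have hsum4 : (↑u : Matrix (Fin 3) (Fin 3) ℝ).mulVec (∑ j, d j • ws j)
            = ∑ j, d j • (↑u : Matrix (Fin 3) (Fin 3) ℝ).mulVec (ws j) := by
          rw [Fin.sum_univ_four, Fin.sum_univ_four, Matrix.mulVec_add, Matrix.mulVec_add,
            Matrix.mulVec_add, Matrix.mulVec_smul, Matrix.mulVec_smul, Matrix.mulVec_smul,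
            Matrix.mulVec_smul]
        rw [← hsum4, hd, Matrix.mulVec_mulVec, u.mul_inv, Matrix.one_mulVec]
      have hcomb : ∑ l, (∑ j, d j * C j l) • ws l = ws i := by
        rw [← hws]
        calc ∑ l, (∑ j, d j * C j l) • ws l
            = ∑ l, ∑ j, (d j * C j l) • ws l := by
              exact Finset.sum_congr rfl fun l _ => Finset.sum_smul
          _ = ∑ j, ∑ l, (d j * C j l) • ws l := Finset.sum_comm
          _ = ∑ j, d j • ∑ l, C j l • ws l := by
              refine Finset.sum_congr rfl fun j _ => ?_
              rw [Finset.smul_sum]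
              exact Finset.sum_congr rfl fun l _ => (mul_smul _ _ _)
          _ = ∑ j, d j • ((↑u : Matrix (Fin 3) (Fin 3) ℝ).mulVec (ws j)) := by
              simp only [hC2]
      have hE1 : ∑ l, (∑ j, d j * C j l) = 1 := by
        rw [Finset.sum_comm]
        calc ∑ j, ∑ l, d j * C j l = ∑ j, d j * ∑ l, C j l := by
              exact Finset.sum_congr rfl fun j _ => (Finset.mul_sum _ _ _).symm
          _ = ∑ j, d j := by
              refine Finset.sum_congr rfl fun j _ => ?_
              rw [hC1 j, mul_one]
          _ = 1 := hd1
      have hE0 : ∀ l, 0 ≤ ∑ j, d j * C j l :=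
        fun l => Finset.sum_nonneg fun j _ => mul_nonneg (hd0 j) (hC0 j l)
      have hEi := vertex_unique i _ hE0 hE1 hcomb i
      rw [if_pos rfl] at hEi
      have hCle : ∀ j, C j i ≤ 1 := by
        intro j
        have := Finset.single_le_sum (fun l _ => hC0 j l) (Finset.mem_univ i)
        rw [hC1 j] at this
        exact this
      have hsum0 : ∑ j, d j * (1 - C j i) = 0 := by
        have hh : ∑ j, d j * (1 - C j i) = (∑ j, d j) - ∑ j, d j * C j i := by
          rw [← Finset.sum_sub_distrib]
          exact Finset.sum_congr rfl fun j _ => by ring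
        rw [hh, hd1, hEi]; ring
      have hzero := (Finset.sum_eq_zero_iff_of_nonneg
        (fun j _ => mul_nonneg (hd0 j) (by linarith [hCle j]))).1 hsum0
      obtain ⟨j, hdj⟩ : ∃ j, 0 < d j := by
        by_contra hcon
        push_neg at hcon
        have hz : ∀ j, d j = 0 := fun j => le_antisymm (hcon j) (hd0 j)
        rw [Fin.sum_univ_four, hz 0, hz 1, hz 2, hz 3] at hd1
        norm_num at hd1
      have hCj1 : C j i = 1 := by
        have := hzero j (Finset.mem_univ j)
        rcases mul_eq_zero.1 this with h | h
        · exact absurd h (ne_of_gt hdj)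
        · linarith
      refine ⟨j, ?_⟩
      rw [← hC2 j]
      have hothers : ∀ l, l ≠ i → C j l = 0 := by
        intro l hl
        have h'' : C j i + ∑ m ∈ Finset.univ.erase i, C j m = 1 := by
          rw [Finset.add_sum_erase _ _ (Finset.mem_univ i)]
          exact hC1 j
        have hsz : ∑ m ∈ Finset.univ.erase i, C j m = 0 := by linarith
        exact (Finset.sum_eq_zero_iff_of_nonneg (fun m _ => hC0 j m)).1 hsz l
          (Finset.mem_erase.2 ⟨hl, Finset.mem_univ l⟩)
      rw [Finset.sum_eq_single i (fun b _ hb => by rw [hothers b hb, zero_smul])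
        (fun h => absurd (Finset.mem_univ i) h), hCj1, one_smul]
    choose f hf using key
    have hfbij : Function.Bijective f :=
      Finite.injective_iff_bijective.1 (fun a b hab => by
        apply ws_inj
        rw [← hf a, ← hf b, hab])
    let e := Equiv.ofBijective f hfbij
    have hσ : ∀ j : Fin 4, (↑u : Matrix (Fin 3) (Fin 3) ℝ).mulVec (ws j) = ws (e.symm j) := by
      intro j
      have := hf (e.symm j)
      rwa [show f (e.symm j) = j from e.apply_symm_apply j] at this
    set σ := e.symm with hσdef
    have hsum : ws (σ 0) + ws (σ 2) = ws (σ 1) + ws (σ 3) := by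
      have hws13 : ws 0 + ws 2 = ws 1 + ws 3 := by
        funext m; fin_cases m <;> norm_num [ws, Matrix.cons_val_two, Matrix.cons_val_three]
      rw [← hσ 0, ← hσ 1, ← hσ 2, ← hσ 3, ← Matrix.mulVec_add, ← Matrix.mulVec_add, hws13]
    rcases h4 (σ 0) with h0 | h0 | h0 | h0 <;>
      rcases h4 (σ 1) with h1 | h1 | h1 | h1 <;>
      rcases h4 (σ 2) with h2 | h2 | h2 | h2 <;>
      rcases h4 (σ 3) with h3 | h3 | h3 | h3 <;>
      rw [h0, h1, h2, h3] at hsum <;>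
      first
      | exact absurd (σ.injective (h0.trans h1.symm)) (by decide)
      | exact absurd (σ.injective (h0.trans h2.symm)) (by decide)
      | exact absurd (σ.injective (h0.trans h3.symm)) (by decide)
      | exact absurd (σ.injective (h1.trans h2.symm)) (by decide)
      | exact absurd (σ.injective (h1.trans h3.symm)) (by decide)
      | exact absurd (σ.injective (h2.trans h3.symm)) (by decide)

      | exact ⟨0, 1, Or.inl rfl, eq_of_ws
          (((hσ 0).trans (congrArg ws h0)).trans Umv0p0.symm)
          (((hσ 1).trans (congrArg ws h1)).trans Umv0p1.symm)
          (((hσ 2).trans (congrArg ws h2)).trans Umv0p2.symm)⟩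
      | exact ⟨0, (-1), Or.inr rfl, eq_of_ws
          (((hσ 0).trans (congrArg ws h0)).trans Umv0m0.symm)
          (((hσ 1).trans (congrArg ws h1)).trans Umv0m1.symm)
          (((hσ 2).trans (congrArg ws h2)).trans Umv0m2.symm)⟩
      | exact ⟨1, 1, Or.inl rfl, eq_of_ws
          (((hσ 0).trans (congrArg ws h0)).trans Umv1p0.symm)
          (((hσ 1).trans (congrArg ws h1)).trans Umv1p1.symm)
          (((hσ 2).trans (congrArg ws h2)).trans Umv1p2.symm)⟩
      | exact ⟨1, (-1), Or.inr rfl, eq_of_ws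
          (((hσ 0).trans (congrArg ws h0)).trans Umv1m0.symm)
          (((hσ 1).trans (congrArg ws h1)).trans Umv1m1.symm)
          (((hσ 2).trans (congrArg ws h2)).trans Umv1m2.symm)⟩
      | exact ⟨2, 1, Or.inl rfl, eq_of_ws
          (((hσ 0).trans (congrArg ws h0)).trans Umv2p0.symm)
          (((hσ 1).trans (congrArg ws h1)).trans Umv2p1.symm)
          (((hσ 2).trans (congrArg ws h2)).trans Umv2p2.symm)⟩
      | exact ⟨2, (-1), Or.inr rfl, eq_of_ws
          (((hσ 0).trans (congrArg ws h0)).trans Umv2m0.symm)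
          (((hσ 1).trans (congrArg ws h1)).trans Umv2m1.symm)
          (((hσ 2).trans (congrArg ws h2)).trans Umv2m2.symm)⟩
      | exact ⟨3, 1, Or.inl rfl, eq_of_ws
          (((hσ 0).trans (congrArg ws h0)).trans Umv3p0.symm)
          (((hσ 1).trans (congrArg ws h1)).trans Umv3p1.symm)
          (((hσ 2).trans (congrArg ws h2)).trans Umv3p2.symm)⟩
      | exact ⟨3, (-1), Or.inr rfl, eq_of_ws
          (((hσ 0).trans (congrArg ws h0)).trans Umv3m0.symm)
          (((hσ 1).trans (congrArg ws h1)).trans Umv3m1.symm)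
          (((hσ 2).trans (congrArg ws h2)).trans Umv3m2.symm)⟩
      | exact absurd (congrFun hsum 0) (by norm_num [ws, Matrix.cons_val_two, Matrix.cons_val_three])
  · rintro ⟨k, s, hs, hUs⟩
    rw [hUs]
    rcases hs with rfl | rfl <;> rcases h4 k with rfl | rfl | rfl | rfl
    · rw [img_eq, Umv0p0, Umv0p1, Umv0p2, Umv0p3]
      all_goals unfold Q
      all_goals congr 1
      all_goals ext x
      all_goals simp only [Set.mem_insert_iff, Set.mem_singleton_iff]
      all_goals tauto
    · rw [img_eq, Umv1p0, Umv1p1, Umv1p2, Umv1p3]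
      all_goals unfold Q
      all_goals congr 1
      all_goals ext x
      all_goals simp only [Set.mem_insert_iff, Set.mem_singleton_iff]
      all_goals tauto
    · rw [img_eq, Umv2p0, Umv2p1, Umv2p2, Umv2p3]
      all_goals unfold Q
      all_goals congr 1
      all_goals ext x
      all_goals simp only [Set.mem_insert_iff, Set.mem_singleton_iff]
      all_goals tauto
    · rw [img_eq, Umv3p0, Umv3p1, Umv3p2, Umv3p3]
      all_goals unfold Q
      all_goals congr 1
      all_goals ext x
      all_goals simp only [Set.mem_insert_iff, Set.mem_singleton_iff]
      all_goals tauto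
    · rw [img_eq, Umv0m0, Umv0m1, Umv0m2, Umv0m3]
      all_goals unfold Q
      all_goals congr 1
      all_goals ext x
      all_goals simp only [Set.mem_insert_iff, Set.mem_singleton_iff]
      all_goals tauto
    · rw [img_eq, Umv1m0, Umv1m1, Umv1m2, Umv1m3]
      all_goals unfold Q
      all_goals congr 1
      all_goals ext x
      all_goals simp only [Set.mem_insert_iff, Set.mem_singleton_iff]
      all_goals tauto
    · rw [img_eq, Umv2m0, Umv2m1, Umv2m2, Umv2m3]
      all_goals unfold Q
      all_goals congr 1
      all_goals ext x
      all_goals simp only [Set.mem_insert_iff, Set.mem_singleton_iff]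
      all_goals tauto
    · rw [img_eq, Umv3m0, Umv3m1, Umv3m2, Umv3m3]
      all_goals unfold Q
      all_goals congr 1
      all_goals ext x
      all_goals simp only [Set.mem_insert_iff, Set.mem_singleton_iff]
      all_goals tauto
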